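/- For any dissimilarity space (X,d), there exists at most one value δ > 0 such that the graph G_δ is not connected; that is, if G_{δ_1} and G_{δ_2} are both disconnected for δ_1, δ_2 > 0, then δ_1 = δ_2. -/

import Mathlib

structure Dissim (X : Type*) where
  d : X → X → ℝ
  symm : ∀ x y, d x y = d y x
  nonneg : ∀ x y, 0 ≤ d x y
  self : ∀ x, d x x = 0

variable {X : Type*}

def Compatible (D : Dissim X) (lt : X → X → Prop) : Prop :=
  ∀ x y z : X, lt x y → lt y z → D.d x y ≤ D.d x z ∧ D.d y z ≤ D.d x z

def IsCompatOrder (D : Dissim X) (lt : X → X → Prop) : Prop :=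
  IsStrictTotalOrder X lt ∧ Compatible D lt

def Robinson (D : Dissim X) : Prop :=
  ∃ lt : X → X → Prop, IsCompatOrder D lt

def IsMmodule (D : Dissim X) (M : Set X) : Prop :=
  ∀ z ∉ M, ∀ x ∈ M, ∀ y ∈ M, D.d z x = D.d z y

def IsInterval (lt : X → X → Prop) (I : Set X) : Prop :=
  ∀ a b c : X, lt a b → lt b c → a ∈ I → c ∈ I → b ∈ I

def IsBlock (D : Dissim X) (Y : Set X) : Prop :=
  ∀ lt : X → X → Prop, IsCompatOrder D lt → IsInterval lt Y

noncomputable def diam (D : Dissim X) (Y : Set X) : ℝ :=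
  sSup (Set.image2 D.d Y Y)

def Gdelta (D : Dissim X) (δ : ℝ) : SimpleGraph X where
  Adj x y := x ≠ y ∧ D.d x y ≠ δ
  symm := by
    refine ⟨?_⟩
    rintro x y ⟨hxy, hd⟩
    exact ⟨hxy.symm, by rw [D.symm]; exact hd⟩
  loopless := by refine ⟨?_⟩; rintro x ⟨h, -⟩; exact h rfl

def Gle (D : Dissim X) (δ : ℝ) : SimpleGraph X where
  Adj x y := x ≠ y ∧ D.d x y ≤ δ
  symm := by
    refine ⟨?_⟩
    rintro x y ⟨hxy, hd⟩
    exact ⟨hxy.symm, by rw [D.symm]; exact hd⟩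
  loopless := by refine ⟨?_⟩; rintro x ⟨h, -⟩; exact h rfl

def Glt (D : Dissim X) (δ : ℝ) : SimpleGraph X where
  Adj x y := x ≠ y ∧ D.d x y < δ
  symm := by
    refine ⟨?_⟩
    rintro x y ⟨hxy, hd⟩
    exact ⟨hxy.symm, by rw [D.symm]; exact hd⟩
  loopless := by refine ⟨?_⟩; rintro x ⟨h, -⟩; exact h rfl

def IsCompOf {V : Type*} (G : SimpleGraph V) (C : Set V) : Prop :=
  ∃ x : V, C = {y | G.Reachable x y}

def MMax (D : Dissim X) : Set (Set X) :=
  {M | IsMmodule D M ∧ M ≠ Set.univ ∧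
    ∀ M' : Set X, IsMmodule D M' → M' ≠ Set.univ → M ⊆ M' → M = M'}

def IsPartition {α : Type*} (P : Set (Set α)) : Prop :=
  (∀ A ∈ P, A.Nonempty) ∧
  (∀ A ∈ P, ∀ B ∈ P, A ≠ B → Disjoint A B) ∧
  ⋃₀ P = Set.univ

def IsCopartition {α : Type*} (P : Set (Set α)) : Prop :=
  IsPartition ((fun M => Mᶜ) '' P)

def SimpleGraph.restrictTo {V : Type*} (G : SimpleGraph V) (S : Set V) : SimpleGraph V where
  Adj x y := x ∈ S ∧ y ∈ S ∧ G.Adj x y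
  symm := by refine ⟨?_⟩; rintro x y ⟨hx, hy, h⟩; exact ⟨hy, hx, h.symm⟩
  loopless := by refine ⟨?_⟩; rintro x ⟨-, -, h⟩; exact G.loopless.irrefl x h

def ConnectedWithin {V : Type*} (G : SimpleGraph V) (S : Set V) : Prop :=
  S.Nonempty ∧ ∀ x ∈ S, ∀ y ∈ S, (G.restrictTo S).Reachable x y

def IsCompWithin {V : Type*} (G : SimpleGraph V) (S : Set V) (C : Set V) : Prop :=
  ∃ x ∈ S, C = {y | (G.restrictTo S).Reachable x y}

def IsStrictTotalOrderOn {α : Type*} (S : Set α) (lt : α → α → Prop) : Prop :=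
  (∀ x ∈ S, ¬ lt x x) ∧
  (∀ x ∈ S, ∀ y ∈ S, ∀ z ∈ S, lt x y → lt y z → lt x z) ∧
  (∀ x ∈ S, ∀ y ∈ S, x ≠ y → (lt x y ∨ lt y x) ∧ ¬ (lt x y ∧ lt y x))

def CompatibleOn (D : Dissim X) (S : Set X) (lt : X → X → Prop) : Prop :=
  ∀ x ∈ S, ∀ y ∈ S, ∀ z ∈ S, lt x y → lt y z → D.d x y ≤ D.d x z ∧ D.d y z ≤ D.d x z

def IsCompatOrderOn (D : Dissim X) (S : Set X) (lt : X → X → Prop) : Prop :=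
  IsStrictTotalOrderOn S lt ∧ CompatibleOn D S lt

def FlatOn (D : Dissim X) (S : Set X) : Prop :=
  ∃ lt : X → X → Prop, IsCompatOrderOn D S lt ∧ (∃ x ∈ S, ∃ y ∈ S, lt x y) ∧
    ∀ lt' : X → X → Prop, IsCompatOrderOn D S lt' →
      (∀ x ∈ S, ∀ y ∈ S, (lt' x y ↔ lt x y)) ∨ (∀ x ∈ S, ∀ y ∈ S, (lt' x y ↔ lt y x))

def Flat (D : Dissim X) : Prop :=
  ∃ lt : X → X → Prop, IsCompatOrder D lt ∧ (∃ x y : X, lt x y) ∧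
    ∀ lt' : X → X → Prop, IsCompatOrder D lt' →
      (∀ x y : X, lt' x y ↔ lt x y) ∨ (∀ x y : X, lt' x y ↔ lt y x)

def IsCopointAt (D : Dissim X) (p : X) (C : Set X) : Prop :=
  IsMmodule D C ∧ C.Nonempty ∧ p ∉ C ∧
  ∀ C' : Set X, IsMmodule D C' → p ∉ C' → C ⊆ C' → C = C'

def bigGraph (D : Dissim X) (δ : ℝ) (I : Set (Set X)) : SimpleGraph (Set X) where
  Adj C C' := C ∈ I ∧ C' ∈ I ∧ C ≠ C' ∧ ∃ x ∈ C, ∃ y ∈ C', δ < D.d x y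
  symm := by
    refine ⟨?_⟩
    rintro C C' ⟨hC, hC', hne, x, hx, y, hy, hd⟩
    exact ⟨hC', hC, hne.symm, y, hy, x, hx, by rw [D.symm]; exact hd⟩
  loopless := by refine ⟨?_⟩; rintro C ⟨-, -, hne, -⟩; exact hne rfl

/-- there is at most one δ > 0 for which G_δ is disconnected. -/
theorem stmt7 [Fintype X] [Nonempty X] (D : Dissim X)
    (δ₁ δ₂ : ℝ) (h₁ : 0 < δ₁) (h₂ : 0 < δ₂)
    (hnc₁ : ¬ (Gdelta D δ₁).Connected)
    (hnc₂ : ¬ (Gdelta D δ₂).Connected) :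
    δ₁ = δ₂ := by
  by_contra hδ
  have hp₁ : ¬ (Gdelta D δ₁).Preconnected := fun h => hnc₁ ⟨h⟩
  have hp₂ : ¬ (Gdelta D δ₂).Preconnected := fun h => hnc₂ ⟨h⟩
  simp only [SimpleGraph.Preconnected, not_forall] at hp₁ hp₂
  obtain ⟨x, y, hxy⟩ := hp₁
  obtain ⟨u, v, huv⟩ := hp₂
  set A : Set X := {z | (Gdelta D δ₁).Reachable x z} with hA
  set B : Set X := {z | (Gdelta D δ₂).Reachable u z} with hB
  have hxA : x ∈ A := SimpleGraph.Reachable.refl x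
  have hyA : y ∉ A := hxy
  have huB : u ∈ B := SimpleGraph.Reachable.refl u
  have hvB : v ∉ B := huv
  have key₁ : ∀ a ∈ A, ∀ b ∉ A, D.d a b = δ₁ := by
    intro a ha b hb
    by_contra hd
    have hab : a ≠ b := fun h => hb (h ▸ ha)
    exact hb (ha.trans (SimpleGraph.Adj.reachable ⟨hab, hd⟩))
  have key₂ : ∀ a ∈ B, ∀ b ∉ B, D.d a b = δ₂ := by
    intro a ha b hb
    by_contra hd
    have hab : a ≠ b := fun h => hb (h ▸ ha)
    exact hb (ha.trans (SimpleGraph.Adj.reachable ⟨hab, hd⟩))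
  have cross : ∀ a ∈ A, ∀ b, b ∉ A → (a ∈ B ↔ b ∈ B) := by
    intro a ha b hb
    constructor
    · intro haB
      by_contra hbB
      exact hδ ((key₁ a ha b hb).symm.trans (key₂ a haB b hbB))
    · intro hbB
      by_contra haB
      have h1 := key₁ a ha b hb
      have h2 := key₂ b hbB a haB
      rw [D.symm] at h2
      exact hδ (h1.symm.trans h2)
  by_cases hxB : x ∈ B
  · have hyB : y ∈ B := (cross x hxA y hyA).mp hxB
    by_cases hvA : v ∈ A
    · exact hvB ((cross v hvA y hyA).mpr hyB)
    · exact hvB ((cross x hxA v hvA).mp hxB)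
  · have hyB : y ∉ B := fun h => hxB ((cross x hxA y hyA).mpr h)
    by_cases huA : u ∈ A
    · exact hyB ((cross u huA y hyA).mp huB)
    · exact hxB ((cross x hxA u huA).mpr huB)
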